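/- There exist constants k_1, k_2 and k_3 such that for t large enough: sup_{x1,x2 ∈ W} E (D_{x1} F_t^{(2)})² (D_{x2} F_t^{(2)})² ≤ k_1 t^{−2}; sup_{x ∈ W} E |D_x F_t^{(2)}|³ ≤ k_2 t^{−3/2}; and sup_{x1,x2,x3 ∈ W} E (D²_{x1,x3} F_t^{(2)})² (D²_{x2,x3} F_t^{(2)})² ≤ k_3 t^{−6}, where F_t^{(2)} = (stress(G,G_L) − E stress(G,G_L))/t^{3/2}. -/

import Mathlib

open MeasureTheory Filter Asymptotics ProbabilityTheory
open scoped ENNReal NNReal Topology Classical RealInnerProductSpace Pointwise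

noncomputable section

/-- `Euc d` is the Euclidean space `ℝ^d`. -/
abbrev Euc (d : ℕ) : Type := EuclideanSpace ℝ (Fin d)

/-- `κ_n`, the volume of the `n`-dimensional unit ball. -/
def unitBallVol (n : ℕ) : ℝ := Real.pi ^ ((n : ℝ) / 2) / Real.Gamma ((n : ℝ) / 2 + 1)

/-- The Beta function `B(a,b) = Γ(a)Γ(b)/Γ(a+b)`. -/
def betaFn (a b : ℝ) : ℝ := Real.Gamma a * Real.Gamma b / Real.Gamma (a + b)

/-- The constant `c_d = 8 π κ_{d-2}² B(3, d/2)²`. -/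
def cdConst (d : ℕ) : ℝ := 8 * Real.pi * unitBallVol (d - 2) ^ 2 * betaFn 3 ((d : ℝ) / 2) ^ 2

/-- The constant `c_d' = π κ_{d-2}³ B(3, d/2)² B(4, d/2)`. -/
def cdConst' (d : ℕ) : ℝ :=
  Real.pi * unitBallVol (d - 2) ^ 3 * betaFn 3 ((d : ℝ) / 2) ^ 2 * betaFn 4 ((d : ℝ) / 2)

variable {d : ℕ}

/-- Orthogonal projection onto the plane (submodule) `L`, viewed as a map `ℝ^d → ℝ^d`. -/
def projL (L : Submodule ℝ (Euc d)) (x : Euc d) : Euc d := (L.orthogonalProjectionOnto x : Euc d)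

/-- `λ_{d-2}((v + L^⊥) ∩ W)`, the `(d-2)`-dimensional (Hausdorff) measure of the slice of `W`
through `v` orthogonal to `L`. -/
def sliceVol (L : Submodule ℝ (Euc d)) (W : Set (Euc d)) (v : Euc d) : ℝ≥0∞ :=
  μH[(d : ℝ) - 2] ((v +ᵥ ((Lᗮ : Submodule ℝ (Euc d)) : Set (Euc d))) ∩ W)

/-- The inner parallel set `W_{-r} = {x : x + r B_d ⊆ W}`. -/
def innerParallel (W : Set (Euc d)) (r : ℝ) : Set (Euc d) :=
  {x | Metric.closedBall x r ⊆ W}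

/-- The projection of the segment `[v,w]` onto the plane `L`. -/
def segProj (L : Submodule ℝ (Euc d)) (v w : Euc d) : Set (Euc d) :=
  projL L '' segment ℝ v w

/-- The quadruple `(v1, v2, w1, w2)` gives two edges (`‖v1-v2‖ ≤ δ`, `‖w1-w2‖ ≤ δ`) whose
projections onto `L` cross inside `A`. -/
def CrossIn (L : Submodule ℝ (Euc d)) (δ : ℝ) (A : Set (Euc d))
    (q : Euc d × Euc d × Euc d × Euc d) : Prop :=
  dist q.1 q.2.1 ≤ δ ∧ dist q.2.2.1 q.2.2.2 ≤ δ ∧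
    (segProj L q.1 q.2.1 ∩ segProj L q.2.2.1 q.2.2.2 ∩ A).Nonempty

/-- All ordered quadruples of *distinct* points (distinct as occurrences) of a configuration. -/
def quadruples (m : Multiset (Euc d)) : Multiset (Euc d × Euc d × Euc d × Euc d) :=
  m.bind fun a => (m.erase a).bind fun b => ((m.erase a).erase b).bind fun c =>
    (((m.erase a).erase b).erase c).map fun e => (a, b, c, e)

/-- `ξ_t(A)`: one eighth of the number of ordered quadruples of distinct vertices forming a
crossing in `A`. -/
def crossCount (L : Submodule ℝ (Euc d)) (δ : ℝ) (A : Set (Euc d))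
    (m : Multiset (Euc d)) : ℝ :=
  ((quadruples m).filter (CrossIn L δ A)).card / 8

/-- The stress `S(a,b)` between two vertices. -/
def stressPair (L : Submodule ℝ (Euc d)) (wt : Euc d → Euc d → ℝ) (a b : Euc d) : ℝ :=
  wt a b * (dist a b - dist (projL L a) (projL L b)) ^ 2

/-- The total stress `(1/2) Σ_{(v1,v2) distinct} S(v1,v2)` of a configuration. -/
def stressM (L : Submodule ℝ (Euc d)) (wt : Euc d → Euc d → ℝ) (m : Multiset (Euc d)) : ℝ :=
  (1 / 2) * (((m ×ˢ m).map fun p => stressPair L wt p.1 p.2).sum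
    - (m.map fun a => stressPair L wt a a).sum)

/-- First order difference operator `D_x f(μ) = f(μ + δ_x) - f(μ)`. -/
def Dop (x : Euc d) (f : Multiset (Euc d) → ℝ) (m : Multiset (Euc d)) : ℝ :=
  f (x ::ₘ m) - f m

/-- Second order difference operator. -/
def Dop2 (x y : Euc d) (f : Multiset (Euc d) → ℝ) (m : Multiset (Euc d)) : ℝ :=
  f (x ::ₘ y ::ₘ m) - f (y ::ₘ m) - f (x ::ₘ m) + f m

/-- Number of points of the configuration `m` lying in `A`. -/
def countIn (A : Set (Euc d)) (m : Multiset (Euc d)) : ℕ := (m.filter (· ∈ A)).card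

/-- The Poisson distribution with mean `r` on `ℕ`. -/
def poissonNat (r : ℝ) : Measure ℕ :=
  Measure.sum fun n => ENNReal.ofReal (Real.exp (-r) * r ^ n / n.factorial) • Measure.dirac n

/-- `V` is a Poisson point process with intensity measure `μ` under `P`: for pairwise disjoint
measurable sets the counts are independent Poisson random variables. -/
def IsPoissonPP {Ω : Type} [MeasurableSpace Ω] (P : Measure Ω)
    (V : Ω → Multiset (Euc d)) (μ : Measure (Euc d)) : Prop :=
  ∀ (n : ℕ) (A : Fin n → Set (Euc d)), (∀ i, MeasurableSet (A i)) →
    Pairwise (Function.onFun Disjoint A) →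
    P.map (fun ω i => countIn (A i) (V ω)) = Measure.pi fun i => poissonNat (μ (A i)).toReal

/-- Expectation. -/
def meanP {Ω : Type} [MeasurableSpace Ω] (P : Measure Ω) (f : Ω → ℝ) : ℝ := ∫ ω, f ω ∂P

/-- Covariance. -/
def covP {Ω : Type} [MeasurableSpace Ω] (P : Measure Ω) (f g : Ω → ℝ) : ℝ :=
  ∫ ω, (f ω - meanP P f) * (g ω - meanP P g) ∂P
/-- The normalized crossing-number functional `F_t^{(1)}`, as a function of the configuration. -/
def F1m {d : ℕ} {Ω : Type} [MeasurableSpace Ω] (P : Measure Ω) (L : Submodule ℝ (Euc d))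
    (δ : ℝ → ℝ) (V : ℝ → Ω → Multiset (Euc d)) (t : ℝ) (m : Multiset (Euc d)) : ℝ :=
  (crossCount L (δ t) Set.univ m
      - meanP P fun ω' => crossCount L (δ t) Set.univ (V t ω'))
    / (t ^ ((7 : ℝ) / 2) * δ t ^ (2 * d + 2))

/-- The normalized stress functional `F_t^{(2)}`, as a function of the configuration. -/
def F2m {d : ℕ} {Ω : Type} [MeasurableSpace Ω] (P : Measure Ω) (L : Submodule ℝ (Euc d))
    (wt : Euc d → Euc d → ℝ) (V : ℝ → Ω → Multiset (Euc d)) (t : ℝ)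
    (m : Multiset (Euc d)) : ℝ :=
  (stressM L wt m - meanP P fun ω' => stressM L wt (V t ω')) / t ^ ((3 : ℝ) / 2)

/-- `F_t^{(i)}` for `i = 1, 2`. -/
def Fm {d : ℕ} {Ω : Type} [MeasurableSpace Ω] (P : Measure Ω) (L : Submodule ℝ (Euc d))
    (wt : Euc d → Euc d → ℝ) (δ : ℝ → ℝ) (V : ℝ → Ω → Multiset (Euc d))
    (i : Fin 2) (t : ℝ) (m : Multiset (Euc d)) : ℝ :=
  if i = 0 then F1m P L δ V t m else F2m P L wt V t m

/-- The random vector `F_t = (F_t^{(1)}, F_t^{(2)})`. -/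
def Fvec {d : ℕ} {Ω : Type} [MeasurableSpace Ω] (P : Measure Ω) (L : Submodule ℝ (Euc d))
    (wt : Euc d → Euc d → ℝ) (δ : ℝ → ℝ) (V : ℝ → Ω → Multiset (Euc d))
    (t : ℝ) (ω : Ω) : EuclideanSpace ℝ (Fin 2) :=
  (WithLp.equiv 2 (Fin 2 → ℝ)).symm fun i => Fm P L wt δ V i t (V t ω)

/-- The covariance matrix `Σ_t` of `F_t`. -/
def covMat {d : ℕ} {Ω : Type} [MeasurableSpace Ω] (P : Measure Ω) (L : Submodule ℝ (Euc d))
    (wt : Euc d → Euc d → ℝ) (δ : ℝ → ℝ) (V : ℝ → Ω → Multiset (Euc d))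
    (t : ℝ) : Matrix (Fin 2) (Fin 2) ℝ :=
  Matrix.of fun i j => covP P (fun ω => Fm P L wt δ V i t (V t ω))
    (fun ω => Fm P L wt δ V j t (V t ω))


noncomputable def ppmf (r : ℝ) (n : ℕ) : ℝ := Real.exp (-r) * r ^ n / n.factorial

lemma ppmf_nonneg {r : ℝ} (hr : 0 ≤ r) (n : ℕ) : 0 ≤ ppmf r n := by
  unfold ppmf; positivity

lemma hasSum_ppmf {r : ℝ} (hr : 0 ≤ r) : HasSum (ppmf r) 1 := by
  have := ProbabilityTheory.poissonPMFRealSum ⟨r, hr⟩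
  exact this

lemma hasSum_ppmf_descFactorial {r : ℝ} (hr : 0 ≤ r) (j : ℕ) :
    HasSum (fun n => ppmf r n * (n.descFactorial j : ℝ)) (r ^ j) := by
  have hinj : Function.Injective (fun n : ℕ => n + j) := add_left_injective j
  have hzero : ∀ x ∉ Set.range (fun n : ℕ => n + j),
      ppmf r x * (x.descFactorial j : ℝ) = 0 := by
    intro x hx
    have hxj : x < j := by
      by_contra h
      exact hx ⟨x - j, show x - j + j = x by omega⟩
    rw [Nat.descFactorial_eq_zero_iff_lt.mpr hxj]
    simp
  rw [← hinj.hasSum_iff hzero]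
  have key : ∀ n : ℕ, ppmf r (n + j) * ((n + j).descFactorial j : ℝ) = r ^ j * ppmf r n := by
    intro n
    have h1 : Nat.factorial n * ((n + j).descFactorial j) = Nat.factorial (n + j) := by
      have := Nat.factorial_mul_descFactorial (n := n + j) (k := j) (by omega)
      simpa using this
    have hn0 : (Nat.factorial n : ℝ) ≠ 0 := by positivity
    have hD : (((n + j).descFactorial j : ℕ) : ℝ) = (Nat.factorial (n + j) : ℝ) / (Nat.factorial n : ℝ) := by
      rw [eq_div_iff hn0, mul_comm]
      exact_mod_cast h1
    unfold ppmf
    rw [hD, pow_add]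
    have hnj0 : ((Nat.factorial (n + j) : ℕ) : ℝ) ≠ 0 := by positivity
    field_simp
  have h := (hasSum_ppmf hr).mul_left (r ^ j)
  rw [mul_one] at h
  exact h.congr_fun key

lemma cast_descFactorial_two (n : ℕ) : ((n.descFactorial 2 : ℕ) : ℝ) = n * (n - 1) := by
  match n with
  | 0 => simp
  | (m+1) =>
    simp only [Nat.descFactorial_succ, Nat.descFactorial_one, Nat.descFactorial_zero, Nat.add_sub_cancel]
    push_cast
    ring

lemma cast_descFactorial_three (n : ℕ) :
    ((n.descFactorial 3 : ℕ) : ℝ) = n * (n - 1) * (n - 2) := by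
  match n with
  | 0 => simp
  | 1 => simp [Nat.descFactorial]
  | (m+2) =>
    simp only [Nat.descFactorial_succ, Nat.descFactorial_one, Nat.descFactorial_zero, Nat.add_sub_cancel,
      show (m+2) - 1 = m + 1 by omega, show (m+2) - 2 = m by omega]
    push_cast
    ring

lemma cast_descFactorial_four (n : ℕ) :
    ((n.descFactorial 4 : ℕ) : ℝ) = n * (n - 1) * (n - 2) * (n - 3) := by
  match n with
  | 0 => simp
  | 1 => simp [Nat.descFactorial]
  | 2 => simp [Nat.descFactorial]
  | (m+3) =>
    simp only [Nat.descFactorial_succ, Nat.descFactorial_one, Nat.descFactorial_zero,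
      show (m+3) - 1 = m + 2 by omega, show (m+3) - 2 = m + 1 by omega,
      show (m+3) - 3 = m by omega]
    push_cast
    ring

lemma hasSum_ppmf_cube {r : ℝ} (hr : 0 ≤ r) :
    HasSum (fun n => ppmf r n * (n : ℝ) ^ 3) (r ^ 3 + 3 * r ^ 2 + r) := by
  have h3 := hasSum_ppmf_descFactorial hr 3
  have h2 := (hasSum_ppmf_descFactorial hr 2).mul_left 3
  have h1 := hasSum_ppmf_descFactorial hr 1
  have h := (h3.add h2).add h1
  have heq : ∀ n : ℕ, ppmf r n * (n : ℝ) ^ 3 =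
      (ppmf r n * (n.descFactorial 3 : ℝ) + 3 * (ppmf r n * (n.descFactorial 2 : ℝ)))
        + ppmf r n * (n.descFactorial 1 : ℝ) := by
    intro n
    rw [cast_descFactorial_three, cast_descFactorial_two, Nat.descFactorial_one]
    ring
  have := h.congr_fun heq
  simpa [pow_one] using this

lemma hasSum_ppmf_quartic {r : ℝ} (hr : 0 ≤ r) :
    HasSum (fun n => ppmf r n * (n : ℝ) ^ 4)
      (r ^ 4 + 6 * r ^ 3 + 7 * r ^ 2 + r) := by
  have h4 := hasSum_ppmf_descFactorial hr 4
  have h3 := (hasSum_ppmf_descFactorial hr 3).mul_left 6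
  have h2 := (hasSum_ppmf_descFactorial hr 2).mul_left 7
  have h1 := hasSum_ppmf_descFactorial hr 1
  have h := ((h4.add h3).add h2).add h1
  have heq : ∀ n : ℕ, ppmf r n * (n : ℝ) ^ 4 =
      ((ppmf r n * (n.descFactorial 4 : ℝ) + 6 * (ppmf r n * (n.descFactorial 3 : ℝ)))
        + 7 * (ppmf r n * (n.descFactorial 2 : ℝ))) + ppmf r n * (n.descFactorial 1 : ℝ) := by
    intro n
    rw [cast_descFactorial_four, cast_descFactorial_three, cast_descFactorial_two,
      Nat.descFactorial_one]
    ring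
  have := h.congr_fun heq
  simpa [pow_one] using this

lemma poissonNat_def (r : ℝ) :
    poissonNat r = Measure.sum fun n => ENNReal.ofReal (ppmf r n) • Measure.dirac n := rfl

lemma isProbabilityMeasure_poissonNat {r : ℝ} (hr : 0 ≤ r) :
    IsProbabilityMeasure (poissonNat r) := by
  constructor
  rw [poissonNat_def, Measure.sum_apply _ MeasurableSet.univ]
  simp only [Measure.smul_apply, measure_univ, smul_eq_mul, mul_one]
  rw [← ENNReal.ofReal_tsum_of_nonneg (ppmf_nonneg hr) (hasSum_ppmf hr).summable,
    (hasSum_ppmf hr).tsum_eq]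
  simp

lemma integral_poissonNat {r : ℝ} (hr : 0 ≤ r) {f : ℕ → ℝ} (hf0 : ∀ n, 0 ≤ f n) {S : ℝ}
    (hS : HasSum (fun n => ppmf r n * f n) S) :
    Integrable f (poissonNat r) ∧ ∫ n, f n ∂(poissonNat r) = S := by
  have hSnn : 0 ≤ S := hS.nonneg fun n => mul_nonneg (ppmf_nonneg hr n) (hf0 n)
  have hlint : ∫⁻ n, ENNReal.ofReal (f n) ∂(poissonNat r) = ENNReal.ofReal S := by
    rw [poissonNat_def, lintegral_sum_measure]
    have : ∀ n : ℕ, ∫⁻ m, ENNReal.ofReal (f m) ∂(ENNReal.ofReal (ppmf r n) • Measure.dirac n)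
        = ENNReal.ofReal (ppmf r n * f n) := by
      intro n
      rw [lintegral_smul_measure, lintegral_dirac, smul_eq_mul, ENNReal.ofReal_mul (ppmf_nonneg hr n)]
    rw [tsum_congr this, ← ENNReal.ofReal_tsum_of_nonneg
      (fun n => mul_nonneg (ppmf_nonneg hr n) (hf0 n)) hS.summable, hS.tsum_eq]
  have hmeas : AEStronglyMeasurable f (poissonNat r) :=
    (measurable_from_nat (f := f)).aestronglyMeasurable
  have hint : Integrable f (poissonNat r) := by
    refine ⟨hmeas, ?_⟩
    rw [hasFiniteIntegral_iff_norm]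
    have : (fun n => ENNReal.ofReal ‖f n‖) = fun n => ENNReal.ofReal (f n) := by
      funext n; rw [Real.norm_of_nonneg (hf0 n)]
    rw [show (∫⁻ n, ENNReal.ofReal ‖f n‖ ∂(poissonNat r)) = ∫⁻ n, ENNReal.ofReal (f n) ∂(poissonNat r) from by rw [this], hlint]
    exact ENNReal.ofReal_lt_top
  refine ⟨hint, ?_⟩
  rw [integral_eq_lintegral_of_nonneg_ae (ae_of_all _ hf0) hmeas, hlint,
    ENNReal.toReal_ofReal hSnn]

section AuxStress

variable {d : ℕ}

lemma stressPair_symm (L : Submodule ℝ (Euc d)) (wt : Euc d → Euc d → ℝ)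
    (hsym : ∀ a b, wt a b = wt b a) (a b : Euc d) :
    stressPair L wt a b = stressPair L wt b a := by
  unfold stressPair
  rw [hsym a b, dist_comm a b, dist_comm (projL L a) (projL L b)]

lemma stressM_cons (L : Submodule ℝ (Euc d)) (wt : Euc d → Euc d → ℝ)
    (hsym : ∀ a b, wt a b = wt b a) (x : Euc d) (m : Multiset (Euc d)) :
    stressM L wt (x ::ₘ m) = stressM L wt m + (m.map (stressPair L wt x)).sum := by
  unfold stressM
  rw [Multiset.cons_product, Multiset.product_cons]
  simp only [Multiset.map_add, Multiset.sum_add, Multiset.map_map, Multiset.map_cons,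
    Multiset.sum_cons, Function.comp]
  have hswap : (m.map fun a => stressPair L wt a x).sum
      = (m.map fun a => stressPair L wt x a).sum := by
    rw [Multiset.map_congr rfl fun a _ => stressPair_symm L wt hsym a x]
  rw [hswap]
  ring

lemma Dop_F2m {Ω : Type} [MeasurableSpace Ω] (P : Measure Ω) (L : Submodule ℝ (Euc d))
    (wt : Euc d → Euc d → ℝ) (hsym : ∀ a b, wt a b = wt b a)
    (V : ℝ → Ω → Multiset (Euc d)) (t : ℝ) (x : Euc d) (m : Multiset (Euc d)) :
    Dop x (F2m P L wt V t) m = (m.map (stressPair L wt x)).sum / t ^ ((3 : ℝ) / 2) := by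
  unfold Dop F2m
  rw [stressM_cons L wt hsym x m]
  ring

lemma Dop2_F2m {Ω : Type} [MeasurableSpace Ω] (P : Measure Ω) (L : Submodule ℝ (Euc d))
    (wt : Euc d → Euc d → ℝ) (hsym : ∀ a b, wt a b = wt b a)
    (V : ℝ → Ω → Multiset (Euc d)) (t : ℝ) (x y : Euc d) (m : Multiset (Euc d)) :
    Dop2 x y (F2m P L wt V t) m = stressPair L wt x y / t ^ ((3 : ℝ) / 2) := by
  unfold Dop2 F2m
  rw [stressM_cons L wt hsym x (y ::ₘ m), stressM_cons L wt hsym y m,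
    stressM_cons L wt hsym x m, Multiset.map_cons, Multiset.sum_cons]
  ring

end AuxStress

/-- **Lemma (Bounds for stress).** Moment bounds for the first and second order difference
operators of the normalized stress functional `F_t^{(2)}`, for `t` large enough. -/
theorem stress_difference_operator_bounds
    (d : ℕ) (hd : 3 ≤ d)
    (Ω : Type) [MeasurableSpace Ω] (P : Measure Ω) [IsProbabilityMeasure P]
    (W : Set (Euc d)) (hWcomp : IsCompact W) (hWconv : Convex ℝ W)
    (hWint : (interior W).Nonempty) (hWvol : volume W = 1)
    (L : Submodule ℝ (Euc d)) (hL : Module.finrank ℝ L = 2)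
    (δ : ℝ → ℝ) (hδpos : ∀ t > 0, 0 < δ t) (hδ0 : Tendsto δ atTop (𝓝 0))
    (V : ℝ → Ω → Multiset (Euc d)) (hVW : ∀ t ω, ∀ x ∈ V t ω, x ∈ W)
    (hPoisson : ∀ t > 0, IsPoissonPP P (V t) (ENNReal.ofReal t • volume.restrict W))
    (wt : Euc d → Euc d → ℝ) (hwtsym : ∀ a b, wt a b = wt b a)
    (hwtnn : ∀ a b, 0 ≤ wt a b)
    (s : ℝ) (hs : 0 < s) (hSbound : ∀ v1 ∈ W, ∀ v2 ∈ W, stressPair L wt v1 v2 ≤ s)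
    :
    ∃ (k1 k2 k3 t0 : ℝ), ∀ t ≥ t0,
      (∀ x1 ∈ W, ∀ x2 ∈ W,
        (∫ ω, Dop x1 (F2m P L wt V t) (V t ω) ^ 2 *
            Dop x2 (F2m P L wt V t) (V t ω) ^ 2 ∂P) ≤ k1 * t ^ (-(2 : ℝ))) ∧
      (∀ x ∈ W,
        (∫ ω, |Dop x (F2m P L wt V t) (V t ω)| ^ 3 ∂P) ≤ k2 * t ^ (-(3 : ℝ) / 2)) ∧
      (∀ x1 ∈ W, ∀ x2 ∈ W, ∀ x3 ∈ W,
        (∫ ω, Dop2 x1 x3 (F2m P L wt V t) (V t ω) ^ 2 *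
            Dop2 x2 x3 (F2m P L wt V t) (V t ω) ^ 2 ∂P) ≤ k3 * t ^ (-(6 : ℝ))) := by
  classical
  refine ⟨15 * s ^ 4, 5 * s ^ 3, s ^ 4, 1, ?_⟩
  intro t ht1
  have ht : (0 : ℝ) < t := lt_of_lt_of_le one_pos ht1
  have hWmeas : MeasurableSet W := hWcomp.isClosed.measurableSet
  have hTpos : (0 : ℝ) < t ^ ((3 : ℝ) / 2) := Real.rpow_pos_of_pos ht _
  have hμW : (ENNReal.ofReal t • volume.restrict W) W = ENNReal.ofReal t := by
    rw [Measure.smul_apply, Measure.restrict_apply hWmeas, Set.inter_self, hWvol]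
    simp
  haveI hPprob : IsProbabilityMeasure (poissonNat t) := isProbabilityMeasure_poissonNat ht.le
  have hPP := hPoisson t ht 1 (fun _ => W) (fun _ => hWmeas)
    (fun i j hij => absurd (Subsingleton.elim i j) hij)
  simp only [hμW, ENNReal.toReal_ofReal ht.le] at hPP
  have hφae : AEMeasurable (fun ω (_ : Fin 1) => countIn W (V t ω)) P := by
    by_contra h
    rw [Measure.map_of_not_aemeasurable h] at hPP
    haveI : IsProbabilityMeasure (Measure.pi fun _ : Fin 1 => poissonNat t) := inferInstance
    have := congrArg (fun μ => μ Set.univ) hPP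
    simp [measure_univ] at this
  have hcomp : (⇑(MeasurableEquiv.funUnique (Fin 1) ℕ)) ∘ (fun ω (_ : Fin 1) => countIn W (V t ω))
      = fun ω => countIn W (V t ω) := rfl
  have hlaw : P.map (fun ω => countIn W (V t ω)) = poissonNat t := by
    rw [← hcomp, ← AEMeasurable.map_map_of_aemeasurable
      ((MeasurableEquiv.funUnique (Fin 1) ℕ).measurable.aemeasurable) hφae, hPP]
    exact (measurePreserving_funUnique (poissonNat t) (Fin 1)).map_eq
  have hNae : AEMeasurable (fun ω => countIn W (V t ω)) P := by
    have := (MeasurableEquiv.funUnique (Fin 1) ℕ).measurable.comp_aemeasurable hφae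
    rw [hcomp] at this
    exact this
  have moment : ∀ (f : ℕ → ℝ), (∀ n, 0 ≤ f n) → ∀ S : ℝ,
      HasSum (fun n => ppmf t n * f n) S →
      Integrable (fun ω => f (countIn W (V t ω))) P ∧
        ∫ ω, f (countIn W (V t ω)) ∂P = S := by
    intro f hf0 S hS
    obtain ⟨hint, hval⟩ := integral_poissonNat ht.le hf0 hS
    have hfm : AEStronglyMeasurable f (P.map (fun ω => countIn W (V t ω))) :=
      (measurable_from_nat (f := f)).aestronglyMeasurable
    refine ⟨(integrable_map_measure hfm hNae).mp (by rw [hlaw]; exact hint), ?_⟩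
    rw [← integral_map hNae hfm, hlaw, hval]
  obtain ⟨hInt4, hVal4⟩ := moment (fun n => (n : ℝ) ^ 4) (fun n => by positivity) _
    (hasSum_ppmf_quartic ht.le)
  obtain ⟨hInt3, hVal3⟩ := moment (fun n => (n : ℝ) ^ 3) (fun n => by positivity) _
    (hasSum_ppmf_cube ht.le)
  have hSnn : ∀ a b : Euc d, 0 ≤ stressPair L wt a b := fun a b =>
    mul_nonneg (hwtnn a b) (sq_nonneg _)
  have hsum_nn : ∀ (x : Euc d) (ω : Ω), 0 ≤ (((V t ω)).map (stressPair L wt x)).sum := by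
    intro x ω
    refine Multiset.sum_nonneg fun b hb => ?_
    obtain ⟨a, _, rfl⟩ := Multiset.mem_map.mp hb
    exact hSnn x a
  have hsum_le : ∀ x ∈ W, ∀ ω : Ω,
      (((V t ω)).map (stressPair L wt x)).sum ≤ s * (countIn W (V t ω) : ℝ) := by
    intro x hx ω
    have hcard : countIn W (V t ω) = Multiset.card (V t ω) := by
      unfold countIn
      rw [Multiset.filter_eq_self.mpr (hVW t ω)]
    calc (((V t ω)).map (stressPair L wt x)).sum
        ≤ Multiset.card (((V t ω)).map (stressPair L wt x)) • s :=
          Multiset.sum_le_card_nsmul _ _ (fun b hb => by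
            obtain ⟨a, ha, rfl⟩ := Multiset.mem_map.mp hb
            exact hSbound x hx a (hVW t ω a ha))
      _ = s * (countIn W (V t ω) : ℝ) := by
          rw [Multiset.card_map, nsmul_eq_mul, hcard]; ring
  have hT4 : (t ^ ((3 : ℝ) / 2)) ^ (4 : ℕ) = t ^ ((6 : ℝ)) := by
    rw [← Real.rpow_natCast (t ^ ((3 : ℝ) / 2)) 4, ← Real.rpow_mul ht.le]
    norm_num
  have hT3 : (t ^ ((3 : ℝ) / 2)) ^ (3 : ℕ) = t ^ ((9 : ℝ) / 2) := by
    rw [← Real.rpow_natCast (t ^ ((3 : ℝ) / 2)) 3, ← Real.rpow_mul ht.le]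
    norm_num
  refine ⟨?_, ?_, ?_⟩
  · -- first bound
    intro x1 hx1 x2 hx2
    have key : ∀ ω : Ω, Dop x1 (F2m P L wt V t) (V t ω) ^ 2 * Dop x2 (F2m P L wt V t) (V t ω) ^ 2
        ≤ (s ^ 4 / t ^ ((6 : ℝ))) * (countIn W (V t ω) : ℝ) ^ 4 := by
      intro ω
      rw [Dop_F2m P L wt hwtsym V t x1, Dop_F2m P L wt hwtsym V t x2]
      set n : ℝ := (countIn W (V t ω) : ℝ) with hn
      have hdiv : ∀ A : ℝ, 0 ≤ A → A ≤ s * n →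
          (A / t ^ ((3 : ℝ) / 2)) ^ 2 ≤ (s * n / t ^ ((3 : ℝ) / 2)) ^ 2 := fun A hA0 hA =>
        pow_le_pow_left₀ (div_nonneg hA0 hTpos.le) ((div_le_div_iff_of_pos_right hTpos).mpr hA) 2
      have hprod := mul_le_mul (hdiv _ (hsum_nn x1 ω) (hsum_le x1 hx1 ω))
        (hdiv _ (hsum_nn x2 ω) (hsum_le x2 hx2 ω)) (sq_nonneg _)
        (sq_nonneg _)
      refine le_trans hprod (le_of_eq ?_)
      have h4 : (s * n / t ^ ((3 : ℝ) / 2)) ^ 2 * (s * n / t ^ ((3 : ℝ) / 2)) ^ 2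
          = s ^ 4 * n ^ 4 / (t ^ ((3 : ℝ) / 2)) ^ (4 : ℕ) := by ring
      rw [h4, hT4]
      ring
    calc (∫ ω, Dop x1 (F2m P L wt V t) (V t ω) ^ 2 * Dop x2 (F2m P L wt V t) (V t ω) ^ 2 ∂P)
        ≤ ∫ ω, (s ^ 4 / t ^ ((6 : ℝ))) * (countIn W (V t ω) : ℝ) ^ 4 ∂P := by
          refine integral_mono_of_nonneg (Filter.Eventually.of_forall fun ω => ?_)
            (hInt4.const_mul _) (Filter.Eventually.of_forall key)
          exact mul_nonneg (sq_nonneg _) (sq_nonneg _)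
      _ = (s ^ 4 / t ^ ((6 : ℝ))) * (t ^ 4 + 6 * t ^ 3 + 7 * t ^ 2 + t) := by
          rw [integral_const_mul, hVal4]
      _ ≤ (s ^ 4 / t ^ ((6 : ℝ))) * (15 * t ^ 4) := by
          have c3 : t ^ 3 ≤ t ^ 4 := pow_le_pow_right₀ ht1 (by norm_num)
          have c2 : t ^ 2 ≤ t ^ 4 := pow_le_pow_right₀ ht1 (by norm_num)
          have c1 : t ≤ t ^ 4 := by
            simpa using pow_le_pow_right₀ ht1 (show 1 ≤ 4 by norm_num)
          have hc : (0 : ℝ) ≤ s ^ 4 / t ^ ((6 : ℝ)) := by positivity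
          exact mul_le_mul_of_nonneg_left (by linarith) hc
      _ = 15 * s ^ 4 * t ^ (-(2 : ℝ)) := by
          rw [show (t : ℝ) ^ (4 : ℕ) = t ^ ((4 : ℝ)) from (Real.rpow_natCast t 4).symm,
            show t ^ (-(2 : ℝ)) = t ^ ((4 : ℝ)) / t ^ ((6 : ℝ)) from by
              rw [← Real.rpow_sub ht]; norm_num]
          ring
  · -- second bound
    intro x hx
    have key : ∀ ω : Ω, |Dop x (F2m P L wt V t) (V t ω)| ^ 3
        ≤ (s ^ 3 / t ^ ((9 : ℝ) / 2)) * (countIn W (V t ω) : ℝ) ^ 3 := by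
      intro ω
      rw [Dop_F2m P L wt hwtsym V t x]
      set n : ℝ := (countIn W (V t ω) : ℝ) with hn
      have h0 : 0 ≤ (((V t ω)).map (stressPair L wt x)).sum / t ^ ((3 : ℝ) / 2) :=
        div_nonneg (hsum_nn x ω) hTpos.le
      rw [abs_of_nonneg h0]
      have hle : (((V t ω)).map (stressPair L wt x)).sum / t ^ ((3 : ℝ) / 2)
          ≤ s * n / t ^ ((3 : ℝ) / 2) := (div_le_div_iff_of_pos_right hTpos).mpr (hsum_le x hx ω)
      refine le_trans (pow_le_pow_left₀ h0 hle 3) (le_of_eq ?_)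
      rw [div_pow, hT3]
      ring
    calc (∫ ω, |Dop x (F2m P L wt V t) (V t ω)| ^ 3 ∂P)
        ≤ ∫ ω, (s ^ 3 / t ^ ((9 : ℝ) / 2)) * (countIn W (V t ω) : ℝ) ^ 3 ∂P := by
          refine integral_mono_of_nonneg (Filter.Eventually.of_forall fun ω => ?_)
            (hInt3.const_mul _) (Filter.Eventually.of_forall key)
          positivity
      _ = (s ^ 3 / t ^ ((9 : ℝ) / 2)) * (t ^ 3 + 3 * t ^ 2 + t) := by
          rw [integral_const_mul, hVal3]
      _ ≤ (s ^ 3 / t ^ ((9 : ℝ) / 2)) * (5 * t ^ 3) := by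
          have c2 : t ^ 2 ≤ t ^ 3 := pow_le_pow_right₀ ht1 (by norm_num)
          have c1 : t ≤ t ^ 3 := by
            simpa using pow_le_pow_right₀ ht1 (show 1 ≤ 3 by norm_num)
          have hc : (0 : ℝ) ≤ s ^ 3 / t ^ ((9 : ℝ) / 2) := by positivity
          exact mul_le_mul_of_nonneg_left (by linarith) hc
      _ = 5 * s ^ 3 * t ^ (-(3 : ℝ) / 2) := by
          rw [show (t : ℝ) ^ (3 : ℕ) = t ^ ((3 : ℝ)) from (Real.rpow_natCast t 3).symm,
            show t ^ (-(3 : ℝ) / 2) = t ^ ((3 : ℝ)) / t ^ ((9 : ℝ) / 2) from by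
              rw [← Real.rpow_sub ht]; norm_num]
          ring
  · -- third bound
    intro x1 hx1 x2 hx2 x3 hx3
    have hrw : ∀ ω : Ω, Dop2 x1 x3 (F2m P L wt V t) (V t ω) ^ 2 *
          Dop2 x2 x3 (F2m P L wt V t) (V t ω) ^ 2
        = (stressPair L wt x1 x3 / t ^ ((3 : ℝ) / 2)) ^ 2 *
          (stressPair L wt x2 x3 / t ^ ((3 : ℝ) / 2)) ^ 2 := fun ω => by
      rw [Dop2_F2m P L wt hwtsym, Dop2_F2m P L wt hwtsym]
    rw [integral_congr_ae (Filter.Eventually.of_forall hrw), integral_const]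
    simp only [probReal_univ, one_smul]
    have hb : stressPair L wt x1 x3 ^ 2 * stressPair L wt x2 x3 ^ 2 ≤ s ^ 4 := by
      calc stressPair L wt x1 x3 ^ 2 * stressPair L wt x2 x3 ^ 2
          ≤ s ^ 2 * s ^ 2 := mul_le_mul (pow_le_pow_left₀ (hSnn x1 x3) (hSbound x1 hx1 x3 hx3) 2)
            (pow_le_pow_left₀ (hSnn x2 x3) (hSbound x2 hx2 x3 hx3) 2) (sq_nonneg _) (sq_nonneg _)
        _ = s ^ 4 := by ring
    calc (stressPair L wt x1 x3 / t ^ ((3 : ℝ) / 2)) ^ 2 *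
          (stressPair L wt x2 x3 / t ^ ((3 : ℝ) / 2)) ^ 2
        = (stressPair L wt x1 x3 ^ 2 * stressPair L wt x2 x3 ^ 2)
            / (t ^ ((3 : ℝ) / 2)) ^ (4 : ℕ) := by ring
      _ ≤ s ^ 4 / (t ^ ((3 : ℝ) / 2)) ^ (4 : ℕ) :=
          div_le_div_of_nonneg_right hb (by positivity)
      _ = s ^ 4 * t ^ (-(6 : ℝ)) := by
          rw [hT4, show t ^ (-(6 : ℝ)) = 1 / t ^ ((6 : ℝ)) from by
            rw [Real.rpow_neg ht.le, one_div]]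
          ring
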